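/- Let λ ≥ 1 + 1/√2 be real and define A(s,t) = λs(2t - s) + s(1-t)(2 + λ + λt) + (1/3)(1-s)²(6 + λ + 2λs). Then for all real s, t with 0 ≤ s ≤ t ≤ 1, A(s,t) ≤ (1 + √2 + 3λ + 3λ³)/(3λ²), and equality holds at s = 1 - (1 + 1/√2)/λ and t = 1 - 1/λ. -/

import Mathlib

/-- For `λ ≥ 1 + 1/√2`, the two-threshold objective
`A(s,t) = λs(2t-s) + s(1-t)(2+λ+λt) + (1/3)(1-s)²(6+λ+2λs)` on
`0 ≤ s ≤ t ≤ 1` is at most `(1 + √2 + 3λ + 3λ³)/(3λ²)`, with equality at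
`s = 1 - (1 + 1/√2)/λ`, `t = 1 - 1/λ`. -/
theorem stmt_7 (lam : ℝ) (hlam : 1 + 1 / Real.sqrt 2 ≤ lam)
    (A : ℝ → ℝ → ℝ)
    (hA : ∀ s t : ℝ, A s t =
      lam * s * (2 * t - s) + s * (1 - t) * (2 + lam + lam * t) +
        (1 / 3) * (1 - s) ^ 2 * (6 + lam + 2 * lam * s)) :
    (∀ s t : ℝ, 0 ≤ s → s ≤ t → t ≤ 1 →
      A s t ≤ (1 + Real.sqrt 2 + 3 * lam + 3 * lam ^ 3) / (3 * lam ^ 2)) ∧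
    A (1 - (1 + 1 / Real.sqrt 2) / lam) (1 - 1 / lam) =
      (1 + Real.sqrt 2 + 3 * lam + 3 * lam ^ 3) / (3 * lam ^ 2) := by
  set c := Real.sqrt 2 with hcdef
  have hc2 : c ^ 2 = 2 := Real.sq_sqrt (by norm_num)
  have hcpos : 0 < c := Real.sqrt_pos.mpr (by norm_num)
  have hc1 : 1 ≤ c := by nlinarith
  have hinv : 1 / c = c / 2 := by
    rw [div_eq_div_iff hcpos.ne' two_ne_zero]; nlinarith
  have hlam' : 1 + c / 2 ≤ lam := by rw [← hinv]; exact hlam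
  have hlam1 : (1:ℝ) < lam := by nlinarith
  have hlampos : (0:ℝ) < lam := by linarith
  constructor
  · intro s t hs hst ht1
    have h1 : 0 ≤ lam * s * (lam * t - lam + 1) ^ 2 :=
      mul_nonneg (mul_nonneg hlampos.le hs) (sq_nonneg _)
    have h2 : 0 ≤ (lam * s - lam + 1 + c / 2) ^ 2 * (lam - lam * s - 1 + c) := by
      apply mul_nonneg (sq_nonneg _)
      nlinarith [mul_nonneg hlampos.le (sub_nonneg.mpr (le_trans hst ht1))]
    have key : 3 * lam ^ 2 * A s t ≤ 1 + c + 3 * lam + 3 * lam ^ 3 := by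
      rw [hA]
      have hid : 1 + c + 3 * lam + 3 * lam ^ 3 -
          3 * lam ^ 2 * (lam * s * (2 * t - s) + s * (1 - t) * (2 + lam + lam * t) +
            (1 / 3) * (1 - s) ^ 2 * (6 + lam + 2 * lam * s)) =
          3 * (lam * s * (lam * t - lam + 1) ^ 2) +
          2 * ((lam * s - lam + 1 + c / 2) ^ 2 * (lam - lam * s - 1 + c)) := by
        linear_combination (-(c + 3 * (lam * s - lam + 1)) / 2) * hc2
      linarith
    rw [le_div_iff₀ (by positivity)]
    linarith
  · rw [hA, hinv]
    have hlne : lam ≠ 0 := hlampos.ne'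
    field_simp
    linear_combination (-c) * hc2
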